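/- For every t ∈ ℤ⁴ with coordinates t_{ijk} (1 ≤ i < j < k ≤ 4), the presented group G(t) on generators g₁,…,g₄ with relations ⁅g_j,g_i⁆ = g_{j+1}^{t_{i,j,j+1}} ··· g₄^{t_{i,j,4}} for 1 ≤ i < j ≤ 4 is consistent; that is, the normal-form map ℤ⁴ → G(t), (a₁,…,a₄) ↦ g₁^{a₁}g₂^{a₂}g₃^{a₃}g₄^{a₄}, is injective. -/

import Mathlib

/-- The relators of the presentation `G(t)` on four generators: for each `1 ≤ i < j ≤ 4`
the relator `⁅g_j,g_i⁆⁻¹ · g_{j+1}^{t_{i,j,j+1}} ⋯ g₄^{t_{i,j,4}}`,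
where `⁅a,b⁆ = a⁻¹b⁻¹ab`. -/
def rels4 (t123 t124 t134 t234 : ℤ) : Set (FreeGroup (Fin 4)) :=
  let g : Fin 4 → FreeGroup (Fin 4) := FreeGroup.of
  { ((g 1)⁻¹ * (g 0)⁻¹ * g 1 * g 0)⁻¹ * (g 2 ^ t123 * g 3 ^ t124),
    ((g 2)⁻¹ * (g 0)⁻¹ * g 2 * g 0)⁻¹ * g 3 ^ t134,
    ((g 2)⁻¹ * (g 1)⁻¹ * g 2 * g 1)⁻¹ * g 3 ^ t234,
    ((g 3)⁻¹ * (g 0)⁻¹ * g 3 * g 0)⁻¹,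
    ((g 3)⁻¹ * (g 1)⁻¹ * g 3 * g 1)⁻¹,
    ((g 3)⁻¹ * (g 2)⁻¹ * g 3 * g 2)⁻¹ }

namespace Consist4

abbrev X4 : Type := ℚ × ℚ × ℚ × ℚ

variable (r s u v : ℚ)

/-- Left multiplication by `g₁` on normal-form coordinates. -/
def σ1 : Equiv.Perm X4 where
  toFun p := (p.1 + 1, p.2.1, p.2.2.1, p.2.2.2)
  invFun p := (p.1 - 1, p.2.1, p.2.2.1, p.2.2.2)
  left_inv p := by obtain ⟨a,b,c,d⟩ := p; simp
  right_inv p := by obtain ⟨a,b,c,d⟩ := p; simp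

/-- Left multiplication by `g₂` on normal-form coordinates. -/
def σ2 : Equiv.Perm X4 where
  toFun p := (p.1, p.2.1 + 1, p.2.2.1 + r * p.1,
    p.2.2.2 + s * p.1 + u * r * (p.1 * (p.1 - 1) / 2) + v * r * p.1 * p.2.1)
  invFun p := (p.1, p.2.1 - 1, p.2.2.1 - r * p.1,
    p.2.2.2 - s * p.1 - u * r * (p.1 * (p.1 - 1) / 2) - v * r * p.1 * (p.2.1 - 1))
  left_inv p := by
    obtain ⟨a,b,c,d⟩ := p
    refine Prod.ext rfl (Prod.ext (by ring) (Prod.ext (by ring) (by ring)))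
  right_inv p := by
    obtain ⟨a,b,c,d⟩ := p
    refine Prod.ext rfl (Prod.ext (by ring) (Prod.ext (by ring) (by ring)))

/-- Left multiplication by `g₃` on normal-form coordinates. -/
def σ3 : Equiv.Perm X4 where
  toFun p := (p.1, p.2.1, p.2.2.1 + 1, p.2.2.2 + u * p.1 + v * p.2.1)
  invFun p := (p.1, p.2.1, p.2.2.1 - 1, p.2.2.2 - u * p.1 - v * p.2.1)
  left_inv p := by
    obtain ⟨a,b,c,d⟩ := p
    refine Prod.ext rfl (Prod.ext rfl (Prod.ext (by ring) (by ring)))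
  right_inv p := by
    obtain ⟨a,b,c,d⟩ := p
    refine Prod.ext rfl (Prod.ext rfl (Prod.ext (by ring) (by ring)))

/-- Left multiplication by `g₄` on normal-form coordinates. -/
def σ4 : Equiv.Perm X4 where
  toFun p := (p.1, p.2.1, p.2.2.1, p.2.2.2 + 1)
  invFun p := (p.1, p.2.1, p.2.2.1, p.2.2.2 - 1)
  left_inv p := by obtain ⟨a,b,c,d⟩ := p; simp
  right_inv p := by obtain ⟨a,b,c,d⟩ := p; simp

lemma σ4_zpow (n : ℤ) : ∀ a b c d : ℚ, ((σ4 ^ n) (a,b,c,d) : X4) = (a,b,c,d+n) := by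
  induction n using Int.induction_on with
  | zero => intro a b c d; simp
  | succ k ih =>
      intro a b c d
      rw [zpow_add_one, Equiv.Perm.mul_apply]
      show (σ4 ^ (k:ℤ)) (σ4 (a,b,c,d)) = _
      rw [show (σ4 (a,b,c,d) : X4) = (a,b,c,d+1) from rfl, ih]
      push_cast; refine Prod.ext rfl (Prod.ext rfl (Prod.ext rfl (by ring)))
  | pred k ih =>
      intro a b c d
      rw [zpow_sub_one, Equiv.Perm.mul_apply]
      show (σ4 ^ (-(k:ℤ))) (σ4⁻¹ (a,b,c,d)) = _
      rw [show (σ4⁻¹ (a,b,c,d) : X4) = (a,b,c,d-1) from rfl, ih]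
      push_cast; refine Prod.ext rfl (Prod.ext rfl (Prod.ext rfl (by ring)))

lemma σ3_zpow (n : ℤ) : ∀ a b c d : ℚ,
    ((σ3 u v ^ n) (a,b,c,d) : X4) = (a,b,c+n,d+n*(u*a+v*b)) := by
  induction n using Int.induction_on with
  | zero => intro a b c d; simp
  | succ k ih =>
      intro a b c d
      rw [zpow_add_one, Equiv.Perm.mul_apply]
      show (σ3 u v ^ (k:ℤ)) (σ3 u v (a,b,c,d)) = _
      rw [show (σ3 u v (a,b,c,d) : X4) = (a,b,c+1,d+u*a+v*b) from rfl, ih]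
      push_cast; refine Prod.ext rfl (Prod.ext rfl (Prod.ext (by ring) (by ring)))
  | pred k ih =>
      intro a b c d
      rw [zpow_sub_one, Equiv.Perm.mul_apply]
      show (σ3 u v ^ (-(k:ℤ))) ((σ3 u v)⁻¹ (a,b,c,d)) = _
      rw [show ((σ3 u v)⁻¹ (a,b,c,d) : X4) = (a,b,c-1,d-u*a-v*b) from rfl, ih]
      push_cast; refine Prod.ext rfl (Prod.ext rfl (Prod.ext (by ring) (by ring)))

lemma σ2_zpow (n : ℤ) : ∀ b c d : ℚ,
    ((σ2 r s u v ^ n) (0,b,c,d) : X4) = (0,b+n,c,d) := by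
  induction n using Int.induction_on with
  | zero => intro b c d; simp
  | succ k ih =>
      intro b c d
      rw [zpow_add_one, Equiv.Perm.mul_apply]
      show (σ2 r s u v ^ (k:ℤ)) (σ2 r s u v (0,b,c,d)) = _
      rw [show (σ2 r s u v (0,b,c,d) : X4) = (0,b+1,c,d) by
        simp only [σ2, Equiv.coe_fn_mk]
        refine Prod.ext rfl (Prod.ext rfl (Prod.ext (by ring) (by ring))), ih]
      push_cast; refine Prod.ext rfl (Prod.ext (by ring) (Prod.ext rfl rfl))
  | pred k ih =>
      intro b c d
      rw [zpow_sub_one, Equiv.Perm.mul_apply]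
      show (σ2 r s u v ^ (-(k:ℤ))) ((σ2 r s u v)⁻¹ (0,b,c,d)) = _
      rw [show ((σ2 r s u v)⁻¹ (0,b,c,d) : X4) = (0,b-1,c,d) by
        simp only [σ2, Equiv.Perm.inv_def, Equiv.coe_fn_symm_mk]
        refine Prod.ext rfl (Prod.ext rfl (Prod.ext (by ring) (by ring))), ih]
      push_cast; refine Prod.ext rfl (Prod.ext (by ring) (Prod.ext rfl rfl))

lemma σ1_zpow (n : ℤ) : ∀ a b c d : ℚ, ((σ1 ^ n) (a,b,c,d) : X4) = (a+n,b,c,d) := by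
  induction n using Int.induction_on with
  | zero => intro a b c d; simp
  | succ k ih =>
      intro a b c d
      rw [zpow_add_one, Equiv.Perm.mul_apply]
      show (σ1 ^ (k:ℤ)) (σ1 (a,b,c,d)) = _
      rw [show (σ1 (a,b,c,d) : X4) = (a+1,b,c,d) from rfl, ih]
      push_cast; refine Prod.ext (by ring) rfl
  | pred k ih =>
      intro a b c d
      rw [zpow_sub_one, Equiv.Perm.mul_apply]
      show (σ1 ^ (-(k:ℤ))) (σ1⁻¹ (a,b,c,d)) = _
      rw [show (σ1⁻¹ (a,b,c,d) : X4) = (a-1,b,c,d) from rfl, ih]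
      push_cast; refine Prod.ext (by ring) rfl

@[simp] lemma σ1_apply (a b c d : ℚ) : (σ1 (a,b,c,d) : X4) = (a+1,b,c,d) := rfl
@[simp] lemma σ1_inv_apply (a b c d : ℚ) : (σ1⁻¹ (a,b,c,d) : X4) = (a-1,b,c,d) := rfl
@[simp] lemma σ2_apply (a b c d : ℚ) :
    (σ2 r s u v (a,b,c,d) : X4) = (a, b + 1, c + r * a,
      d + s * a + u * r * (a * (a - 1) / 2) + v * r * a * b) := rfl
@[simp] lemma σ2_inv_apply (a b c d : ℚ) :
    ((σ2 r s u v)⁻¹ (a,b,c,d) : X4) = (a, b - 1, c - r * a,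
      d - s * a - u * r * (a * (a - 1) / 2) - v * r * a * (b - 1)) := rfl
@[simp] lemma σ3_apply (a b c d : ℚ) :
    (σ3 u v (a,b,c,d) : X4) = (a, b, c + 1, d + u * a + v * b) := rfl
@[simp] lemma σ3_inv_apply (a b c d : ℚ) :
    ((σ3 u v)⁻¹ (a,b,c,d) : X4) = (a, b, c - 1, d - u * a - v * b) := rfl
@[simp] lemma σ4_apply (a b c d : ℚ) : (σ4 (a,b,c,d) : X4) = (a,b,c,d+1) := rfl
@[simp] lemma σ4_inv_apply (a b c d : ℚ) : (σ4⁻¹ (a,b,c,d) : X4) = (a,b,c,d-1) := rfl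

variable (t123 t124 t134 t234 : ℤ)

/-- The map sending the four generators to the four permutations. -/
def σf : Fin 4 → Equiv.Perm X4 :=
  ![σ1, σ2 t123 t124 t134 t234, σ3 t134 t234, σ4]

lemma rels_hold : ∀ w ∈ rels4 t123 t124 t134 t234,
    FreeGroup.lift (σf t123 t124 t134 t234) w = 1 := by
  intro w hw
  set r : ℚ := (t123 : ℚ)
  set s : ℚ := (t124 : ℚ)
  set u : ℚ := (t134 : ℚ)
  set v : ℚ := (t234 : ℚ)
  simp only [rels4, Set.mem_insert_iff, Set.mem_singleton_iff] at hw
  rcases hw with h|h|h|h|h|h <;> subst h <;>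
    · simp only [map_mul, map_inv, map_zpow, FreeGroup.lift_apply_of, mul_inv_rev, inv_inv]
      apply Equiv.ext
      rintro ⟨a,b,c,d⟩
      simp only [σf, Matrix.cons_val_zero, Matrix.cons_val_one, Matrix.head_cons,
        Matrix.cons_val_two, Matrix.tail_cons, Matrix.cons_val_three]
      simp only [Equiv.Perm.mul_apply, Equiv.Perm.one_apply, σ3_zpow, σ4_zpow,
        σ1_apply, σ1_inv_apply, σ2_apply, σ2_inv_apply, σ3_apply, σ3_inv_apply,
        σ4_apply, σ4_inv_apply]
      refine Prod.ext (by push_cast; ring) (Prod.ext (by push_cast; ring)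
        (Prod.ext (by push_cast; ring) (by push_cast; ring)))

lemma normal_form_eval (a : Fin 4 → ℤ) :
    ((σ1 ^ a 0 * σ2 (t123:ℚ) (t124:ℚ) (t134:ℚ) (t234:ℚ) ^ a 1 *
      σ3 (t134:ℚ) (t234:ℚ) ^ a 2 * σ4 ^ a 3) ((0:ℚ),(0:ℚ),(0:ℚ),(0:ℚ)) : X4) =
      ((a 0 : ℚ), (a 1 : ℚ), (a 2 : ℚ), (a 3 : ℚ)) := by
  simp only [Equiv.Perm.mul_apply, σ4_zpow, σ3_zpow, σ2_zpow, σ1_zpow]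
  refine Prod.ext (by ring) (Prod.ext (by ring) (Prod.ext (by ring) (by ring)))

end Consist4

/-- For every `t ∈ ℤ⁴`, the presentation `G(t)` on four generators is consistent:
the normal-form map `ℤ⁴ → G(t)` is injective. -/
theorem consistent_of_length_four (t123 t124 t134 t234 : ℤ) :
    Function.Injective
      (fun a : Fin 4 → ℤ =>
        ((PresentedGroup.of 0 : PresentedGroup (rels4 t123 t124 t134 t234)) ^ a 0) *
        (PresentedGroup.of 1) ^ a 1 * (PresentedGroup.of 2) ^ a 2 *
        (PresentedGroup.of 3) ^ a 3) := by
  intro a b hab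
  set φ := PresentedGroup.toGroup (Consist4.rels_hold t123 t124 t134 t234) with hφ
  have h2 := congrArg φ hab
  simp only [map_mul, map_zpow, PresentedGroup.toGroup.of, hφ] at h2
  have h3 := congrArg (fun (π : Equiv.Perm Consist4.X4) => π ((0:ℚ),(0:ℚ),(0:ℚ),(0:ℚ))) h2
  simp only [Consist4.σf, Matrix.cons_val_zero, Matrix.cons_val_one, Matrix.head_cons,
    Matrix.cons_val_two, Matrix.tail_cons, Matrix.cons_val_three,
    Consist4.normal_form_eval] at h3
  simp only [Prod.mk.injEq, Int.cast_inj] at h3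
  funext i
  fin_cases i
  · exact h3.1
  · exact h3.2.1
  · exact h3.2.2.1
  · exact h3.2.2.2
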